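/- Every automorphism of the algebra B(H) of bounded operators on a separable Hilbert space H is of the form x ↦ R x R⁻¹ for some invertible bounded operator R on H. -/

import Mathlib

open scoped InnerProductSpace
open Filter Topology

set_option linter.unusedSectionVars false
set_option linter.unusedTactic false
set_option maxHeartbeats 1000000

noncomputable section AutBH

variable {H : Type*} [NormedAddCommGroup H] [InnerProductSpace ℂ H] [CompleteSpace H]

/-- rank one operator `x ↦ ⟪w, x⟫ • ξ`. -/
noncomputable def rk (ξ w : H) : H →L[ℂ] H := (innerSL ℂ w).smulRight ξ

lemma rk_apply (ξ w x : H) : rk ξ w x = ⟪w, x⟫_ℂ • ξ := rfl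

lemma comp_rk (T : H →L[ℂ] H) (ξ w : H) : T * rk ξ w = rk (T ξ) w := by
  ext x; simp [rk_apply, ContinuousLinearMap.mul_apply, map_smul]

lemma rk_comp (T : H →L[ℂ] H) (ξ w : H) :
    rk ξ w * T = rk ξ (ContinuousLinearMap.adjoint T w) := by
  ext x
  simp [rk_apply, ContinuousLinearMap.mul_apply, ContinuousLinearMap.adjoint_inner_left]

lemma exists_dual_vec {u u2 : H} (hu : u ≠ 0) (h2 : u2 ∉ Submodule.span ℂ {u}) :
    ∃ w : H, ⟪w, u⟫_ℂ = 1 ∧ ⟪w, u2⟫_ℂ = 0 := by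
  set V : Submodule ℂ H := Submodule.span ℂ {u2} with hV
  set w0 : H := u - (V.orthogonalProjection u : H) with hw0
  have hw0V : w0 ∈ Vᗮ := Submodule.sub_starProjection_mem_orthogonal (K := V) u
  have hw0u2 : ⟪w0, u2⟫_ℂ = 0 := by
    rw [inner_eq_zero_symm]
    exact hw0V u2 (Submodule.mem_span_singleton_self u2)
  have hw0ne : w0 ≠ 0 := by
    intro h
    have : u ∈ V := by
      have := sub_eq_zero.mp h
      rw [this]; exact (V.orthogonalProjection u).2
    obtain ⟨a, ha⟩ := Submodule.mem_span_singleton.mp this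
    have ha0 : a ≠ 0 := by rintro rfl; simp at ha; exact hu ha.symm
    exact h2 (Submodule.mem_span_singleton.mpr ⟨a⁻¹, by rw [← ha, smul_smul, inv_mul_cancel₀ ha0, one_smul]⟩)
  have hw0u : ⟪w0, u⟫_ℂ = (‖w0‖ : ℂ) ^ 2 := by
    have : u = w0 + (V.orthogonalProjection u : H) := by rw [hw0]; abel
    rw [this, inner_add_right]
    have h1 : ⟪w0, (V.orthogonalProjection u : H)⟫_ℂ = 0 := by
      rw [inner_eq_zero_symm]
      exact hw0V _ (V.orthogonalProjection u).2
    rw [h1, add_zero, inner_self_eq_norm_sq_to_K]; norm_num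
  refine ⟨((‖w0‖ : ℂ) ^ 2)⁻¹ • w0, ?_, ?_⟩
  · rw [inner_smul_left, hw0u]
    have : (starRingEnd ℂ) (((‖w0‖ : ℂ) ^ 2)⁻¹) = ((‖w0‖ : ℂ) ^ 2)⁻¹ := by
      simp [← Complex.ofReal_pow]
    rw [this, inv_mul_cancel₀]
    simpa [← Complex.ofReal_pow, pow_eq_zero_iff] using hw0ne
  · rw [inner_smul_left, hw0u2, mul_zero]

/-- An idempotent `q ≠ 0` such that `q T q` is always a scalar multiple of `q`
has one-dimensional range. -/
lemma rank_one_of_qTq (q : H →L[ℂ] H) (hq2 : q * q = q) (hq0 : q ≠ 0)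
    (hsc : ∀ T : H →L[ℂ] H, ∃ c : ℂ, q * T * q = c • q) :
    ∃ u : H, u ≠ 0 ∧ q u = u ∧ ∀ x : H, q x ∈ Submodule.span ℂ {u} := by
  have : ∃ x0, q x0 ≠ 0 := by
    by_contra h
    push_neg at h
    exact hq0 (by ext x; simpa using h x)
  obtain ⟨x0, hx0⟩ := this
  set u : H := q x0 with hu
  have hqu : q u = u := by
    rw [hu, ← ContinuousLinearMap.mul_apply, hq2]
  refine ⟨u, hx0, hqu, fun x => ?_⟩
  by_contra h2
  obtain ⟨w, hwu, hwx⟩ := exists_dual_vec hx0 h2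
  obtain ⟨c, hc⟩ := hsc (rk u w)
  have e1 : (q * rk u w * q) x0 = u := by
    simp [ContinuousLinearMap.mul_apply, rk_apply, ← hu, hwu, hqu]
  have e2 : (q * rk u w * q) x = 0 := by
    simp [ContinuousLinearMap.mul_apply, rk_apply, hwx]
  rw [hc] at e1 e2
  have hc1 : c = 1 := by
    have : c • u = u := by simpa [← hu] using e1
    by_contra hne
    have h0 : (c - 1) • u = 0 := by rw [sub_smul, one_smul, this, sub_self]
    exact hx0 ((smul_eq_zero.mp h0).resolve_left (sub_ne_zero.mpr hne))
  rw [hc1, one_smul] at e2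
  exact h2 (e2 ▸ Submodule.zero_mem _)


lemma rk_add (a b w : H) : rk (a + b) w = rk a w + rk b w := by
  ext x; simp [rk_apply, smul_add]

lemma rk_smul (c : ℂ) (a w : H) : rk (c • a) w = c • rk a w := by
  ext x
  simp only [rk_apply, ContinuousLinearMap.smul_apply]
  rw [smul_comm]

lemma eq_one_of_smul_eq {c : ℂ} {u : H} (h : c • u = u) (hu : u ≠ 0) : c = 1 := by
  by_contra hne
  have h0 : (c - 1) • u = 0 := by rw [sub_smul, one_smul, h, sub_self]
  exact hu ((smul_eq_zero.mp h0).resolve_left (sub_ne_zero.mpr hne))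

end AutBH

theorem stmt_0 {H : Type*} [NormedAddCommGroup H] [InnerProductSpace ℂ H]
    [CompleteSpace H] [TopologicalSpace.SeparableSpace H]
    (φ : (H →L[ℂ] H) ≃ₐ[ℂ] (H →L[ℂ] H)) :
    ∃ R : (H →L[ℂ] H)ˣ, ∀ x : H →L[ℂ] H, φ x = ↑R * x * ↑R⁻¹ := by
  classical
  rcases subsingleton_or_nontrivial H with hs | hn
  · haveI : Subsingleton (H →L[ℂ] H) := ⟨fun f g => by ext x; exact Subsingleton.elim _ _⟩
    exact ⟨1, fun x => Subsingleton.elim _ _⟩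
  obtain ⟨e0, he0⟩ := exists_ne (0 : H)
  set e : H := (‖e0‖ : ℝ)⁻¹ • e0 with he
  have hne : ‖e‖ = 1 := by
    rw [he, norm_smul]
    simp [norm_inv, inv_mul_cancel₀ (norm_ne_zero_iff.mpr he0)]
  have hene : e ≠ 0 := by intro h; rw [h] at hne; simp at hne
  have hee : ⟪e, e⟫_ℂ = 1 := by
    rw [inner_self_eq_norm_sq_to_K, hne]; norm_num
  set p : H →L[ℂ] H := rk e e with hp
  have hp2 : p * p = p := by
    ext x
    simp [hp, rk_apply, ContinuousLinearMap.mul_apply, inner_smul_right, hee, hne]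
  have hp0 : p ≠ 0 := by
    intro h
    have : p e = 0 := by rw [h]; rfl
    rw [hp, rk_apply, hee, one_smul] at this
    exact hene this
  set q : H →L[ℂ] H := φ p with hq
  have hq2 : q * q = q := by rw [hq, ← map_mul, hp2]
  have hq0 : q ≠ 0 := by
    intro h
    exact hp0 (φ.injective (by rw [← hq, h, map_zero]))
  have hsc : ∀ T : H →L[ℂ] H, ∃ c : ℂ, q * T * q = c • q := by
    intro T
    refine ⟨⟪e, φ.symm T e⟫_ℂ, ?_⟩
    have hpTp : p * φ.symm T * p = ⟪e, φ.symm T e⟫_ℂ • p := by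
      ext x
      simp [hp, rk_apply, ContinuousLinearMap.mul_apply, map_smul, inner_smul_right,
        smul_smul, mul_comm]
    calc q * T * q = φ (p * φ.symm T * p) := by
          rw [map_mul, map_mul, φ.apply_symm_apply, hq]
      _ = ⟪e, φ.symm T e⟫_ℂ • q := by rw [hpTp, map_smul, hq]
  obtain ⟨u, hu0, hqu, hspan⟩ := rank_one_of_qTq q hq2 hq0 hsc
  have hnu : ((‖u‖ : ℂ) ^ 2) ≠ 0 := by
    simpa [← Complex.ofReal_pow, pow_eq_zero_iff] using hu0
  set v : H →L[ℂ] ℂ := ((‖u‖ : ℂ) ^ 2)⁻¹ • ((innerSL ℂ u).comp q) with hvdef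
  have hv : ∀ x, q x = v x • u := by
    intro x
    obtain ⟨c, hc⟩ := Submodule.mem_span_singleton.mp (hspan x)
    have hvx : v x = c := by
      rw [hvdef]
      simp only [ContinuousLinearMap.smul_apply, ContinuousLinearMap.comp_apply,
        innerSL_apply_apply]
      rw [show q x = c • u from hc.symm, inner_smul_right, inner_self_eq_norm_sq_to_K]
      field_simp
      rw [smul_eq_mul, one_div, mul_comm c, ← mul_assoc]
      convert one_mul c using 2
      exact inv_mul_cancel₀ hnu
    rw [hvx, ← hc]
  have hvu : v u = 1 := eq_one_of_smul_eq (by rw [← hv u]; exact hqu) hu0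
  -- the intertwiner
  set Rlin : H →ₗ[ℂ] H :=
    { toFun := fun ξ => φ (rk ξ e) u
      map_add' := by
        intro a b
        show φ (rk (a + b) e) u = φ (rk a e) u + φ (rk b e) u
        rw [rk_add, map_add]; rfl
      map_smul' := by
        intro c a
        show φ (rk (c • a) e) u = c • φ (rk a e) u
        rw [rk_smul, map_smul]; rfl } with hRdef
  have hR : ∀ (x : H →L[ℂ] H) (ξ : H), φ x (Rlin ξ) = Rlin (x ξ) := by
    intro x ξ
    show φ x (φ (rk ξ e) u) = φ (rk (x ξ) e) u
    rw [← comp_rk, map_mul]; rfl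
  have hfix : ∀ ξ : H, rk ξ e * p = rk ξ e := by
    intro ξ
    ext x
    simp [hp, rk_apply, ContinuousLinearMap.mul_apply, inner_smul_right, hee, hne]
  -- kernel lemma
  have hker : ∀ ζ : H, (∀ w, φ (rk e w) ζ = 0) → ζ = 0 := by
    intro ζ hz
    by_contra hzne
    apply hq0
    ext z
    have hnz : ((‖ζ‖ : ℂ) ^ 2) ≠ 0 := by
      simpa [← Complex.ofReal_pow, pow_eq_zero_iff] using hzne
    set b : H →L[ℂ] H := φ.symm (rk z (((‖ζ‖ : ℂ) ^ 2)⁻¹ • ζ)) with hb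
    have hbz : φ b ζ = z := by
      rw [hb, φ.apply_symm_apply, rk_apply, inner_smul_left, inner_self_eq_norm_sq_to_K]
      have : (starRingEnd ℂ) (((‖ζ‖ : ℂ) ^ 2)⁻¹) = ((‖ζ‖ : ℂ) ^ 2)⁻¹ := by
        simp [← Complex.ofReal_pow]
      rw [this]
      have hz2 : (‖ζ‖ : ℝ) ≠ 0 := norm_ne_zero_iff.mpr hzne
      field_simp
      convert one_smul ℂ z using 2
      exact div_self hnz
    calc q z = q (φ b ζ) := by rw [hbz]
      _ = (q * φ b) ζ := rfl
      _ = φ (rk e (ContinuousLinearMap.adjoint b e)) ζ := by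
          rw [hq, ← map_mul, show p * b = rk e (ContinuousLinearMap.adjoint b e) from by
            rw [hp, rk_comp]]
      _ = 0 := hz _
      _ = (0 : H →L[ℂ] H) z := rfl
  -- continuity via closed graph
  have hRcont : Continuous Rlin := by
    apply Rlin.continuous_of_seq_closed_graph
    intro un x y hux huy
    have key : ∀ w, φ (rk e w) (y - Rlin x) = 0 := by
      intro w
      have t1 : Filter.Tendsto (fun n => φ (rk e w) (Rlin (un n))) Filter.atTop
          (nhds (φ (rk e w) y)) := ((φ (rk e w)).continuous.tendsto y).comp huy
      have heq : (fun n => φ (rk e w) (Rlin (un n)))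
          = fun n => ⟪w, un n⟫_ℂ • Rlin e := by
        funext n
        rw [hR, show (rk e w) (un n) = ⟪w, un n⟫_ℂ • e from rfl, map_smul]
      have t2 : Filter.Tendsto (fun n => ⟪w, un n⟫_ℂ • Rlin e) Filter.atTop
          (nhds (⟪w, x⟫_ℂ • Rlin e)) :=
        (((innerSL ℂ w).continuous.tendsto x).comp hux).smul_const _
      rw [heq] at t1
      have hlim : φ (rk e w) y = ⟪w, x⟫_ℂ • Rlin e := tendsto_nhds_unique t1 t2
      have h2 : φ (rk e w) (Rlin x) = ⟪w, x⟫_ℂ • Rlin e := by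
        rw [hR, show (rk e w) x = ⟪w, x⟫_ℂ • e from rfl, map_smul]
      rw [map_sub, hlim, h2, sub_self]
    exact sub_eq_zero.mp (hker _ key)
  -- the inverse map
  set Slin : H →ₗ[ℂ] H :=
    { toFun := fun η => φ.symm (v.smulRight η) e
      map_add' := by
        intro a b
        show φ.symm (v.smulRight (a + b)) e = φ.symm (v.smulRight a) e + φ.symm (v.smulRight b) e
        rw [show v.smulRight (a + b) = v.smulRight a + v.smulRight b from by
          ext x; simp [smul_add], map_add]
        rfl
      map_smul' := by
        intro c a
        show φ.symm (v.smulRight (c • a)) e = c • φ.symm (v.smulRight a) e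
        rw [show v.smulRight (c • a) = c • v.smulRight a from by
          ext x
          simp only [ContinuousLinearMap.smulRight_apply, ContinuousLinearMap.smul_apply]
          rw [smul_comm], map_smul φ.symm c (v.smulRight a)]
        rfl } with hSdef
  have hSR : ∀ ξ, Slin (Rlin ξ) = ξ := by
    intro ξ
    have hT : v.smulRight (Rlin ξ) = φ (rk ξ e) := by
      ext z
      calc v.smulRight (Rlin ξ) z = v z • φ (rk ξ e) u := rfl
        _ = φ (rk ξ e) (v z • u) := (map_smul _ _ _).symm
        _ = φ (rk ξ e) (q z) := by rw [← hv z]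
        _ = (φ (rk ξ e) * q) z := rfl
        _ = φ (rk ξ e * p) z := by rw [map_mul, hq]
        _ = φ (rk ξ e) z := by rw [hfix]
    show φ.symm (v.smulRight (Rlin ξ)) e = ξ
    rw [hT, φ.symm_apply_apply, rk_apply, hee, one_smul]
  have hRS : ∀ η, Rlin (Slin η) = η := by
    intro η
    set S : H →L[ℂ] H := φ.symm (v.smulRight η) with hS
    have hrkS : rk (S e) e = S * p := by
      ext x
      simp [hp, rk_apply, ContinuousLinearMap.mul_apply, map_smul]
    calc Rlin (Slin η) = φ (rk (S e) e) u := rfl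
      _ = φ (S * p) u := by rw [hrkS]
      _ = (φ S * q) u := by rw [map_mul, hq]
      _ = φ S (q u) := rfl
      _ = φ S u := by rw [hqu]
      _ = (v.smulRight η) u := by rw [hS, φ.apply_symm_apply]
      _ = v u • η := rfl
      _ = η := by rw [hvu, one_smul]
  set Rel : H ≃ₗ[ℂ] H := LinearEquiv.ofLinear Rlin Slin
    (by ext η; exact hRS η) (by ext ξ; exact hSR ξ) with hRel
  set Req : H ≃L[ℂ] H := Rel.toContinuousLinearEquivOfContinuous hRcont with hReq
  refine ⟨Req.toUnit, fun x => ?_⟩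
  have hcoe : ∀ ξ : H, (Req.toUnit : H →L[ℂ] H) ξ = Rlin ξ := fun ξ => rfl
  have hcomm : φ x * (Req.toUnit : H →L[ℂ] H) = (Req.toUnit : H →L[ℂ] H) * x := by
    ext ξ
    show φ x ((Req.toUnit : H →L[ℂ] H) ξ) = (Req.toUnit : H →L[ℂ] H) (x ξ)
    rw [hcoe, hcoe]
    exact hR x ξ
  calc φ x = φ x * ↑Req.toUnit * ↑Req.toUnit⁻¹ := by
        rw [mul_assoc, Units.mul_inv, mul_one]
    _ = ↑Req.toUnit * x * ↑Req.toUnit⁻¹ := by rw [hcomm]
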